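/- arXiv:1608.05495 — 4 statements merged into one kernel-verified Lean document; each statement's English description precedes it below -/
import Mathlib

section
/- For any connected graph G, sdim_f(G) ≤ min{ |M(G)|/2, sdim(G) }. -/
open SimpleGraph

/-- `Sset G x y` is the set `S{x,y}` of vertices `z` such that `x` lies on some shortest
`y`–`z` path or `y` lies on some shortest `x`–`z` path in `G`. -/
def Sset {V : Type*} (G : SimpleGraph V) (x y : V) : Set V :=
  {z | (∃ p : G.Walk y z, p.length = G.dist y z ∧ x ∈ p.support) ∨
       (∃ p : G.Walk x z, p.length = G.dist x z ∧ y ∈ p.support)}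

/-- A strong resolving function of `G`: `g : V → [0,1]` with `g(S{x,y}) ≥ 1` for all
distinct vertices `x, y`. -/
def IsSRF {V : Type*} (G : SimpleGraph V) (g : V → ℝ) : Prop :=
  (∀ v, 0 ≤ g v ∧ g v ≤ 1) ∧ ∀ x y : V, x ≠ y → 1 ≤ ∑ᶠ z ∈ Sset G x y, g z

/-- The fractional strong metric dimension of `G`. -/
noncomputable def sdimf {V : Type*} (G : SimpleGraph V) : ℝ :=
  sInf {s : ℝ | ∃ g : V → ℝ, IsSRF G g ∧ s = ∑ᶠ v, g v}

/-- A strong resolving set of `G`: every pair of distinct vertices is strongly resolved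
by some vertex of `S` (i.e. some vertex of `S` lies in `S{x,y}`). -/
def IsSRSet {V : Type*} (G : SimpleGraph V) (S : Set V) : Prop :=
  ∀ x y : V, x ≠ y → ∃ z ∈ S, z ∈ Sset G x y

/-- The strong metric dimension of `G`: the minimum cardinality of a strong resolving set. -/
noncomputable def sdim {V : Type*} (G : SimpleGraph V) : ℕ :=
  sInf {n : ℕ | ∃ S : Set V, IsSRSet G S ∧ S.ncard = n}

/-- `u` is maximally distant from `v`: `d(u,v) ≥ d(w,v)` for every neighbor `w` of `u`. -/
def MaxDistFrom {V : Type*} (G : SimpleGraph V) (u v : V) : Prop :=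
  ∀ w : V, G.Adj u w → G.dist w v ≤ G.dist u v

/-- `u` and `v` are mutually maximally distant (MMD) in `G`. -/
def MMD {V : Type*} (G : SimpleGraph V) (u v : V) : Prop :=
  u ≠ v ∧ MaxDistFrom G u v ∧ MaxDistFrom G v u

/-- The strong resolving graph of `G` (on the ambient vertex set): `u ~ v` iff `u` MMD `v`. -/
def SRGraph {V : Type*} (G : SimpleGraph V) : SimpleGraph V where
  Adj := MMD G
  symm := ⟨fun _ _ h => ⟨h.1.symm, h.2.2, h.2.1⟩⟩
  loopless := ⟨fun _ h => h.1 rfl⟩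

/-- `M(G)`: the set of vertices that are mutually maximally distant with some vertex. -/
def Mset {V : Type*} (G : SimpleGraph V) : Set V := {x | ∃ y, MMD G x y}

/-- The matching number of `G`. -/
noncomputable def matchNum {V : Type*} (G : SimpleGraph V) : ℕ :=
  sSup {n : ℕ | ∃ M : G.Subgraph, M.IsMatching ∧ M.edgeSet.ncard = n}

/-- The corona product `G ⊙ H`. -/
def corona {V W : Type*} (G : SimpleGraph V) (H : SimpleGraph W) :
    SimpleGraph (V ⊕ V × W) where
  Adj x y :=
    match x, y with
    | Sum.inl u, Sum.inl u' => G.Adj u u'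
    | Sum.inl u, Sum.inr iw => u = iw.1
    | Sum.inr iw, Sum.inl u => iw.1 = u
    | Sum.inr iw, Sum.inr iw' => iw.1 = iw'.1 ∧ H.Adj iw.2 iw'.2
  symm := by
    constructor
    rintro (u | iw) (u' | iw') h
    · exact G.symm.symm _ _ h
    · exact h.symm
    · exact h.symm
    · exact ⟨h.1.symm, H.symm.symm _ _ h.2⟩
  loopless := by
    constructor
    rintro (u | iw) h
    · exact G.loopless.irrefl u h
    · exact H.loopless.irrefl iw.2 h.2

/-- `K₁ ⊙ H`: the graph obtained from `H` by adding one new vertex adjacent to every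
vertex of `H`. -/
def cone {W : Type*} (H : SimpleGraph W) : SimpleGraph (Option W) where
  Adj x y :=
    match x, y with
    | none, none => False
    | none, some _ => True
    | some _, none => True
    | some w, some w' => H.Adj w w'
  symm := by
    constructor
    rintro (_ | w) (_ | w') h
    · exact h
    · exact trivial
    · exact trivial
    · exact H.symm.symm _ _ h
  loopless := by
    constructor
    rintro (_ | w) h
    · exact h
    · exact H.loopless.irrefl w h

/-- The lexicographic product `G[H]`. -/
def lexProd {V W : Type*} (G : SimpleGraph V) (H : SimpleGraph W) :
    SimpleGraph (V × W) where
  Adj x y := G.Adj x.1 y.1 ∨ (x.1 = y.1 ∧ H.Adj x.2 y.2)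
  symm := by
    constructor
    rintro x y (h | ⟨h1, h2⟩)
    · exact Or.inl (G.symm.symm _ _ h)
    · exact Or.inr ⟨h1.symm, H.symm.symm _ _ h2⟩
  loopless := by
    constructor
    rintro x (h | ⟨_, h2⟩)
    · exact G.loopless.irrefl x.1 h
    · exact H.loopless.irrefl x.2 h2

/-- `SL{x,y} = (N[x] ∪ N[y]) ∩ S{x,y}`. -/
def SLset {W : Type*} (H : SimpleGraph W) (x y : W) : Set W :=
  (insert x (H.neighborSet x) ∪ insert y (H.neighborSet y)) ∩ Sset H x y

/-- A strong locating function of `H`. -/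
def IsSLF {W : Type*} (H : SimpleGraph W) (f : W → ℝ) : Prop :=
  (∀ v, 0 ≤ f v ∧ f v ≤ 1) ∧ ∀ x y : W, x ≠ y → 1 ≤ ∑ᶠ z ∈ SLset H x y, f z

/-- `sl_f(H)`: the minimum weight of a strong locating function of `H`. -/
noncomputable def slf {W : Type*} (H : SimpleGraph W) : ℝ :=
  sInf {s : ℝ | ∃ f : W → ℝ, IsSLF H f ∧ s = ∑ᶠ v, f v}

/-- `u` has a true twin: some other vertex with the same closed neighborhood. -/
def HasTrueTwin {V : Type*} (G : SimpleGraph V) (u : V) : Prop :=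
  ∃ v : V, v ≠ u ∧ insert v (G.neighborSet v) = insert u (G.neighborSet u)

/-- `u` has a false twin: some other vertex with the same open neighborhood. -/
def HasFalseTwin {V : Type*} (G : SimpleGraph V) (u : V) : Prop :=
  ∃ v : V, v ≠ u ∧ G.neighborSet v = G.neighborSet u

/-- `m₁(G)`: number of vertices in type-1 (singleton) classes of the twin relation. -/
noncomputable def m1 {V : Type*} (G : SimpleGraph V) : ℕ :=
  {u : V | ¬ HasTrueTwin G u ∧ ¬ HasFalseTwin G u}.ncard

/-- `m₂(G)`: number of vertices in type-2 (clique) classes of the twin relation. -/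
noncomputable def m2 {V : Type*} (G : SimpleGraph V) : ℕ :=
  {u : V | HasTrueTwin G u}.ncard

/-- `m₃(G)`: number of vertices in type-3 (independent set) classes of the twin relation. -/
noncomputable def m3 {V : Type*} (G : SimpleGraph V) : ℕ :=
  {u : V | HasFalseTwin G u}.ncard

/-- The strong resolving graph of `G` (whose vertex set is `M(G)`) is Hamiltonian:
there is a cycle in `SRGraph G` passing through every vertex of `M(G)`. -/
def SRHamiltonian {V : Type*} (G : SimpleGraph V) : Prop :=
  ∃ (u : V) (p : (SRGraph G).Walk u u), p.IsCycle ∧ ∀ v ∈ Mset G, v ∈ p.support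

section Aux
variable {V : Type*} [Fintype V] (G : SimpleGraph V)

lemma dist_lt_card (hG : G.Connected) (x y : V) : G.dist x y < Fintype.card V := by
  obtain ⟨p, hp, hl⟩ := hG.exists_path_of_dist x y
  rw [← hl]; exact hp.length_lt

/-- Extension lemma: every vertex x extends away from y to a vertex maximally
distant from y, lying beyond x on a geodesic from y. -/
lemma exists_maxDist (hG : G.Connected) (x y : V) :
    ∃ u, MaxDistFrom G u y ∧ G.dist y u = G.dist y x + G.dist x u := by
  suffices h : ∀ n (x : V), Fintype.card V - G.dist x y < n →
      ∃ u, MaxDistFrom G u y ∧ G.dist y u = G.dist y x + G.dist x u by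
    exact h (Fintype.card V + 1) x (by omega)
  intro n
  induction n with
  | zero => omega
  | succ n ih =>
    intro x hx
    by_cases hmax : MaxDistFrom G x y
    · exact ⟨x, hmax, by simp⟩
    · simp only [MaxDistFrom, not_forall] at hmax
      obtain ⟨w, hadj, hwd⟩ := hmax
      push_neg at hwd
      have hxw : G.dist x w ≤ 1 := G.dist_le (SimpleGraph.Walk.cons hadj SimpleGraph.Walk.nil)
      have hwy : G.dist w y = G.dist x y + 1 := by
        have := hG.dist_triangle (u := w) (v := x) (w := y)
        have hc : G.dist w x = G.dist x w := SimpleGraph.dist_comm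
        omega
      have hlt : G.dist x y < Fintype.card V := dist_lt_card G hG x y
      obtain ⟨u, hu, hdu⟩ := ih w (by omega)
      refine ⟨u, hu, le_antisymm (hG.dist_triangle) ?_⟩
      have h1 : G.dist x u ≤ G.dist x w + G.dist w u := hG.dist_triangle
      have h2 : G.dist y w = G.dist x y + 1 := by rw [SimpleGraph.dist_comm]; omega
      have h3 : G.dist y x = G.dist x y := SimpleGraph.dist_comm
      omega

/-- For distinct x y, there is a vertex u in M(G) ∩ S{x,y} lying beyond x. -/
lemma exists_MMD_Sset (hG : G.Connected) {x y : V} (hxy : x ≠ y) :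
    ∃ u, u ∈ Mset G ∧ u ∈ Sset G x y ∧ G.dist y u = G.dist y x + G.dist x u := by
  obtain ⟨u, hu, hdu⟩ := exists_maxDist G hG x y
  -- u is in Sset G x y
  have hSset : u ∈ Sset G x y := by
    obtain ⟨p1, hl1⟩ := (hG y x).exists_walk_length_eq_dist
    obtain ⟨p2, hl2⟩ := (hG x u).exists_walk_length_eq_dist
    refine Or.inl ⟨p1.append p2, ?_, ?_⟩
    · rw [SimpleGraph.Walk.length_append, hl1, hl2, hdu]
    · rw [SimpleGraph.Walk.mem_support_append_iff]
      exact Or.inl p1.end_mem_support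
  -- find v MMD with u
  obtain ⟨v, hv, hdv⟩ := exists_maxDist G hG y u
  have huv : u ≠ v := by
    rintro rfl
    have h0 : G.dist u u = 0 := by simp
    rw [h0] at hdv
    have hy : G.dist u y = 0 := by omega
    have : u = y := (hG.dist_eq_zero_iff).mp hy
    subst this
    -- u = y and MaxDistFrom y y: y has no neighbors, contradicting connectivity
    obtain ⟨p, hl⟩ := (hG u x).exists_walk_length_eq_dist
    cases p with
    | nil => exact hxy rfl
    | cons hadj q =>
      have := hu _ hadj
      rw [h0] at this
      have := (hG.dist_eq_zero_iff).mp (Nat.le_zero.mp this)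
      subst this
      exact G.irrefl hadj
  have hmmd : MMD G u v := by
    refine ⟨huv, ?_, hv⟩
    intro w hadj
    have h1 : G.dist w v ≤ G.dist w y + G.dist y v := hG.dist_triangle
    have h2 : G.dist w y ≤ G.dist u y := hu w hadj
    have h3 : G.dist u y + G.dist y v = G.dist u v := hdv.symm
    omega
  exact ⟨u, ⟨v, hmmd⟩, hSset, hdu⟩

lemma Sset_symm (x y z : V) (h : z ∈ Sset G y x) : z ∈ Sset G x y :=
  h.symm

end Aux

/-- For any connected graph `G`,
`sdim_f(G) ≤ min{ |M(G)|/2, sdim(G) }`. -/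
theorem sdimf_le_min_half_Mset_sdim {V : Type*} [Fintype V] (G : SimpleGraph V)
    (hG : G.Connected) :
    sdimf G ≤ min (((Mset G).ncard : ℝ) / 2) (sdim G : ℝ) := by
  classical
  have hbdd : BddBelow {s : ℝ | ∃ g : V → ℝ, IsSRF G g ∧ s = ∑ᶠ v, g v} := by
    refine ⟨0, ?_⟩
    rintro s ⟨g, ⟨hg01, _⟩, rfl⟩
    rw [finsum_eq_sum_of_fintype]
    exact Finset.sum_nonneg fun v _ => (hg01 v).1
  refine le_min ?_ ?_
  · -- first bound: |M(G)|/2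
    set g : V → ℝ := (Mset G).indicator (fun _ => (1:ℝ)/2) with hgdef
    have hSRF : IsSRF G g := by
      constructor
      · intro v
        constructor
        · exact Set.indicator_nonneg (fun _ _ => by norm_num) v
        · by_cases hv : v ∈ Mset G <;> simp [hgdef, Set.indicator, hv] <;> norm_num
      · intro x y hxy
        obtain ⟨u, huM, huS, hdu⟩ := exists_MMD_Sset G hG hxy
        obtain ⟨u', huM', huS', hdu'⟩ := exists_MMD_Sset G hG (Ne.symm hxy)
        have huS' : u' ∈ Sset G x y := Sset_symm G x y u' huS'
        have hne : u ≠ u' := by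
          rintro rfl
          have h1 : G.dist x y = G.dist y x := SimpleGraph.dist_comm
          have h2 : 0 < G.dist x y := hG.pos_dist_of_ne hxy
          omega
        rw [finsum_mem_eq_finite_toFinset_sum _ (Set.toFinite _)]
        have hsub : ({u, u'} : Finset V) ⊆ (Set.toFinite (Sset G x y)).toFinset := by
          intro z hz
          simp only [Finset.mem_insert, Finset.mem_singleton] at hz
          rcases hz with rfl | rfl
          · exact (Set.Finite.mem_toFinset _).mpr huS
          · exact (Set.Finite.mem_toFinset _).mpr huS'
        calc (1:ℝ) = ∑ z ∈ ({u, u'} : Finset V), g z := by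
              rw [Finset.sum_pair hne]
              simp [hgdef, Set.indicator, huM, huM']
              norm_num
          _ ≤ ∑ z ∈ (Set.toFinite (Sset G x y)).toFinset, g z := by
              refine Finset.sum_le_sum_of_subset_of_nonneg hsub fun v _ _ => ?_
              exact Set.indicator_nonneg (fun _ _ => by norm_num) v
    have hsum : ∑ᶠ v, g v = ((Mset G).ncard : ℝ) / 2 := by
      rw [hgdef, ← finsum_mem_def, finsum_mem_eq_finite_toFinset_sum _ (Set.toFinite _),
        Finset.sum_const, Set.ncard_eq_toFinset_card _ (Set.toFinite _)]
      simp
      ring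
    calc sdimf G ≤ ∑ᶠ v, g v := csInf_le hbdd ⟨g, hSRF, rfl⟩
      _ = ((Mset G).ncard : ℝ) / 2 := hsum
  · -- second bound: sdim G
    have hne : {n : ℕ | ∃ S : Set V, IsSRSet G S ∧ S.ncard = n}.Nonempty := by
      refine ⟨(Set.univ : Set V).ncard, Set.univ, ?_, rfl⟩
      intro x y hxy
      refine ⟨y, Set.mem_univ y, ?_⟩
      obtain ⟨p, hl⟩ := (hG x y).exists_walk_length_eq_dist
      exact Or.inr ⟨p, hl, p.end_mem_support⟩
    obtain ⟨S, hS, hcard⟩ := Nat.sInf_mem hne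
    set g : V → ℝ := S.indicator (fun _ => (1:ℝ)) with hgdef
    have hSRF : IsSRF G g := by
      constructor
      · intro v
        constructor
        · exact Set.indicator_nonneg (fun _ _ => by norm_num) v
        · by_cases hv : v ∈ S <;> simp [hgdef, Set.indicator, hv]
      · intro x y hxy
        obtain ⟨z, hzS, hzSset⟩ := hS x y hxy
        rw [finsum_mem_eq_finite_toFinset_sum _ (Set.toFinite _)]
        have hz : z ∈ (Set.toFinite (Sset G x y)).toFinset :=
          (Set.Finite.mem_toFinset _).mpr hzSset
        calc (1:ℝ) = g z := by simp [hgdef, Set.indicator, hzS]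
          _ ≤ ∑ w ∈ (Set.toFinite (Sset G x y)).toFinset, g w := by
              refine Finset.single_le_sum (fun v _ => ?_) hz
              exact Set.indicator_nonneg (fun _ _ => by norm_num) v
    have hsum : ∑ᶠ v, g v = (sdim G : ℝ) := by
      rw [hgdef, ← finsum_mem_def, finsum_mem_eq_finite_toFinset_sum _ (Set.toFinite _),
        Finset.sum_const]
      have h : (Set.toFinite S).toFinset.card = sdim G := by
        rw [← Set.ncard_eq_toFinset_card _ (Set.toFinite S), hcard]; rfl
      simp only [nsmul_eq_mul, mul_one, h]
    calc sdimf G ≤ ∑ᶠ v, g v := csInf_le hbdd ⟨g, hSRF, rfl⟩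
      _ = (sdim G : ℝ) := hsum
end

section
/- Let G be a connected graph of order n ≥ 2 and let H be any graph of order m ≥ 1. Then sdim_f(G ⊙ H) = nm/2. -/
open SimpleGraph

section CoronaAux

open Sum

variable {V W : Type*} (G : SimpleGraph V) (H : SimpleGraph W)

/-- The inclusion of `G` into `corona G H`. -/
def homInl : G →g corona G H where
  toFun := Sum.inl
  map_rel' := fun h => h

variable {G H}

lemma corona_adj_inl_inr (i : V) (w : W) : (corona G H).Adj (inl i) (inr (i, w)) := rfl

lemma corona_adj_inr_inl (i : V) (w : W) : (corona G H).Adj (inr (i, w)) (inl i) := rfl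

lemma corona_connected (hG : G.Connected) : (corona G H).Connected := by
  have hne : Nonempty V := hG.nonempty
  have hinl : ∀ a b : V, (corona G H).Reachable (inl a) (inl b) := by
    intro a b
    obtain ⟨p⟩ := hG.preconnected a b
    exact ⟨p.map (homInl G H)⟩
  constructor
  rintro (a | ⟨i, w⟩) (b | ⟨j, w'⟩)
  · exact hinl a b
  · exact (hinl a j).trans (corona_adj_inl_inr j w').reachable
  · exact (corona_adj_inr_inl i w).reachable.trans (hinl i b)
  · exact ((corona_adj_inr_inl i w).reachable.trans (hinl i j)).trans
      (corona_adj_inl_inr j w').reachable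

/-- Projection to `V`. -/
def cpi : V ⊕ V × W → V := fun x => match x with | inl u => u | inr p => p.1

lemma dist_cpi_le (hG : G.Connected) {a b : V ⊕ V × W} (p : (corona G H).Walk a b) :
    G.dist (cpi a) (cpi b) ≤ p.length := by
  induction p with
  | nil => simp [SimpleGraph.dist_self]
  | @cons a c b h q ih =>
    rw [SimpleGraph.Walk.length_cons]
    match a, c, h with
    | inl u, inl u', h =>
      have hadj : G.Adj u u' := h
      have h1 : G.dist u u' ≤ 1 := by
        have := SimpleGraph.dist_le hadj.toWalk
        simpa using this
      have h2 := hG.dist_triangle (u := u) (v := u') (w := cpi b)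
      have ih' : G.dist u' (cpi b) ≤ q.length := ih
      show G.dist u (cpi b) ≤ q.length + 1
      omega
    | inl u, inr p2, h =>
      have : (u : V) = p2.1 := h
      simpa [cpi, this] using Nat.le_succ_of_le ih
    | inr p1, inl u, h =>
      have : p1.1 = u := h
      simpa [cpi, this] using Nat.le_succ_of_le ih
    | inr p1, inr p2, h =>
      have : p1.1 = p2.1 := h.1
      simpa [cpi, this] using Nat.le_succ_of_le ih

lemma corona_dist_inl_inl (hG : G.Connected) (a b : V) :
    (corona G H).dist (inl a : V ⊕ V × W) (inl b) = G.dist a b := by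
  apply le_antisymm
  · obtain ⟨p, hp⟩ := hG.exists_walk_length_eq_dist a b
    have := SimpleGraph.dist_le (p.map (homInl G H))
    rwa [SimpleGraph.Walk.length_map, hp] at this
  · obtain ⟨p, hp⟩ := (corona_connected (H := H) hG).exists_walk_length_eq_dist
      (inl a : V ⊕ V × W) (inl b)
    have := dist_cpi_le hG p
    rw [hp] at this
    exact this

lemma walk_from_copy (i : V) {a z : V ⊕ V × W} (p : (corona G H).Walk a z)
    (ha : ∃ w, a = inr (i, w)) (hz : ∀ w', z ≠ inr (i, w')) :
    1 + (corona G H).dist (inl i) z ≤ p.length := by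
  induction p with
  | nil =>
    obtain ⟨w, rfl⟩ := ha
    exact absurd rfl (hz w)
  | @cons a c b h q ih =>
    obtain ⟨w, rfl⟩ := ha
    rw [SimpleGraph.Walk.length_cons]
    match c, h with
    | inl u, h =>
      have hu : i = u := h
      subst hu
      have := SimpleGraph.dist_le q
      omega
    | inr p2, h =>
      have h1 : i = p2.1 := h.1
      have := ih ⟨p2.2, by rw [h1]⟩ hz
      omega

lemma corona_dist_inr_inl (hG : G.Connected) (i : V) (w : W) (b : V) :
    (corona G H).dist (inr (i, w) : V ⊕ V × W) (inl b) = 1 + G.dist i b := by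
  apply le_antisymm
  · obtain ⟨p, hp⟩ := hG.exists_walk_length_eq_dist i b
    have h0 : (corona G H).dist (inr (i, w) : V ⊕ V × W) (inl b) ≤
        (SimpleGraph.Walk.cons (corona_adj_inr_inl i w) (p.map (homInl G H))).length :=
      SimpleGraph.dist_le _
    erw [SimpleGraph.Walk.length_cons, SimpleGraph.Walk.length_map, hp] at h0
    omega
  · obtain ⟨p, hp⟩ := (corona_connected (H := H) hG).exists_walk_length_eq_dist
      (inr (i, w) : V ⊕ V × W) (inl b)
    have := walk_from_copy i p ⟨w, rfl⟩ (fun w' h => by exact absurd h (by simp))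
    rw [hp, corona_dist_inl_inl hG] at this
    exact this

lemma corona_dist_inr_inr (hG : G.Connected) {i j : V} (hij : i ≠ j) (w w' : W) :
    (corona G H).dist (inr (i, w) : V ⊕ V × W) (inr (j, w')) = 2 + G.dist i j := by
  apply le_antisymm
  · obtain ⟨p, hp⟩ := hG.exists_walk_length_eq_dist i j
    have h0 : (corona G H).dist (inr (i, w) : V ⊕ V × W) (inr (j, w')) ≤
        (SimpleGraph.Walk.cons (corona_adj_inr_inl i w)
          ((p.map (homInl G H)).concat (corona_adj_inl_inr j w'))).length :=
      SimpleGraph.dist_le _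
    erw [SimpleGraph.Walk.length_cons, SimpleGraph.Walk.length_concat,
      SimpleGraph.Walk.length_map, hp] at h0
    omega
  · obtain ⟨p, hp⟩ := (corona_connected (H := H) hG).exists_walk_length_eq_dist
      (inr (i, w) : V ⊕ V × W) (inr (j, w'))
    have := walk_from_copy i p ⟨w, rfl⟩ (fun w'' h => by
      apply hij
      have := (Sum.inr.inj h)
      exact (congrArg Prod.fst this).symm)
    rw [hp] at this
    have h2 : (corona G H).dist (inl i : V ⊕ V × W) (inr (j, w')) = 1 + G.dist i j := by
      rw [SimpleGraph.dist_comm (G := corona G H), corona_dist_inr_inl hG j w' i,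
        SimpleGraph.dist_comm (G := G) (u := j) (v := i)]
    omega

lemma corona_dist_same_copy_le (hG : G.Connected) (i : V) (w w' : W) :
    (corona G H).dist (inr (i, w) : V ⊕ V × W) (inr (i, w')) ≤ 2 := by
  have h1 := (corona_connected (H := H) hG).dist_triangle
    (u := (inr (i, w) : V ⊕ V × W)) (v := inl i) (w := inr (i, w'))
  have h2 : (corona G H).dist (inr (i, w) : V ⊕ V × W) (inl i) = 1 := by
    rw [corona_dist_inr_inl hG, G.dist_self]
  have h3 : (corona G H).dist (inl i : V ⊕ V × W) (inr (i, w')) = 1 := by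
    rw [SimpleGraph.dist_comm (G := corona G H), corona_dist_inr_inl hG i w' i, G.dist_self]
  omega

/-! ### Generic `Sset` lemmas -/

lemma left_mem_Sset {V' : Type*} {Γ : SimpleGraph V'} (h : Γ.Connected) (x y : V') :
    x ∈ Sset Γ x y := by
  obtain ⟨p, hp⟩ := h.exists_walk_length_eq_dist y x
  exact Or.inl ⟨p, hp, p.end_mem_support⟩

lemma right_mem_Sset {V' : Type*} {Γ : SimpleGraph V'} (h : Γ.Connected) (x y : V') :
    y ∈ Sset Γ x y := by
  obtain ⟨p, hp⟩ := h.exists_walk_length_eq_dist x y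
  exact Or.inr ⟨p, hp, p.end_mem_support⟩

lemma Sset_symm_s8 {V' : Type*} (Γ : SimpleGraph V') (x y : V') :
    Sset Γ x y = Sset Γ y x := by
  ext z; exact or_comm

lemma mem_Sset_dist {V' : Type*} {Γ : SimpleGraph V'} {x y z : V'} (hz : z ∈ Sset Γ x y) :
    (Γ.dist y x + Γ.dist x z ≤ Γ.dist y z) ∨ (Γ.dist x y + Γ.dist y z ≤ Γ.dist x z) := by
  classical
  rcases hz with ⟨p, hlen, hx⟩ | ⟨p, hlen, hy⟩
  · left
    have hspec := p.take_spec hx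
    have hl : (p.takeUntil x hx).length + (p.dropUntil x hx).length = p.length := by
      conv_rhs => rw [← hspec]
      rw [SimpleGraph.Walk.length_append]
    have h1 := SimpleGraph.dist_le (p.takeUntil x hx)
    have h2 := SimpleGraph.dist_le (p.dropUntil x hx)
    omega
  · right
    have hspec := p.take_spec hy
    have hl : (p.takeUntil y hy).length + (p.dropUntil y hy).length = p.length := by
      conv_rhs => rw [← hspec]
      rw [SimpleGraph.Walk.length_append]
    have h1 := SimpleGraph.dist_le (p.takeUntil y hy)
    have h2 := SimpleGraph.dist_le (p.dropUntil y hy)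
    omega

lemma mid_mem_Sset {V' : Type*} {Γ : SimpleGraph V'} (h : Γ.Connected) {x y z : V'}
    (hd : Γ.dist x z = Γ.dist x y + Γ.dist y z) : z ∈ Sset Γ x y := by
  obtain ⟨p, hp⟩ := h.exists_walk_length_eq_dist x y
  obtain ⟨q, hq⟩ := h.exists_walk_length_eq_dist y z
  refine Or.inr ⟨p.append q, ?_, ?_⟩
  · rw [SimpleGraph.Walk.length_append, hp, hq, hd]
  · rw [SimpleGraph.Walk.mem_support_append_iff]
    exact Or.inl p.end_mem_support

/-! ### Characterization of `Sset` for cross-copy pairs -/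

lemma cross_aux (hG : G.Connected) {i j : V} (hij : i ≠ j) (w w' : W) (z : V ⊕ V × W)
    (hz : (corona G H).dist (inr (j, w')) (inr (i, w)) +
        (corona G H).dist (inr (i, w)) z ≤ (corona G H).dist (inr (j, w')) z) :
    z = inr (i, w) := by
  have dyx : (corona G H).dist (inr (j, w') : V ⊕ V × W) (inr (i, w)) = 2 + G.dist j i :=
    corona_dist_inr_inr hG hij.symm w' w
  match z with
  | inl t =>
    have d1 : (corona G H).dist (inr (j, w') : V ⊕ V × W) (inl t) = 1 + G.dist j t :=
      corona_dist_inr_inl hG j w' t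
    have d2 : (corona G H).dist (inr (i, w) : V ⊕ V × W) (inl t) = 1 + G.dist i t :=
      corona_dist_inr_inl hG i w t
    have htri := hG.dist_triangle (u := j) (v := i) (w := t)
    omega
  | inr (k, w2) =>
    by_cases hk : k = i
    · subst hk
      by_cases hw : w2 = w
      · subst hw; rfl
      · exfalso
        have d1 : (corona G H).dist (inr (j, w') : V ⊕ V × W) (inr (k, w2)) =
            2 + G.dist j k := corona_dist_inr_inr hG hij.symm w' w2
        have d2 : 0 < (corona G H).dist (inr (k, w) : V ⊕ V × W) (inr (k, w2)) :=
          (corona_connected (H := H) hG).pos_dist_of_ne (by simp [hw, Ne.symm hw])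
        omega
    · exfalso
      by_cases hkj : k = j
      · subst hkj
        have d1 : (corona G H).dist (inr (i, w) : V ⊕ V × W) (inr (k, w2)) =
            2 + G.dist i k := corona_dist_inr_inr hG hij w w2
        have d2 := corona_dist_same_copy_le (H := H) hG k w' w2
        omega
      · have d1 : (corona G H).dist (inr (j, w') : V ⊕ V × W) (inr (k, w2)) =
            2 + G.dist j k := corona_dist_inr_inr hG (fun h => hkj h.symm) w' w2
        have d2 : (corona G H).dist (inr (i, w) : V ⊕ V × W) (inr (k, w2)) =
            2 + G.dist i k := corona_dist_inr_inr hG (fun h => hk h.symm) w w2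
        have htri := hG.dist_triangle (u := j) (v := i) (w := k)
        omega

lemma Sset_cross (hG : G.Connected) {i j : V} (hij : i ≠ j) (w w' : W) :
    Sset (corona G H) (inr (i, w)) (inr (j, w')) =
      {(inr (i, w) : V ⊕ V × W), inr (j, w')} := by
  apply Set.Subset.antisymm
  · intro z hz
    rcases mem_Sset_dist hz with h | h
    · exact Or.inl (cross_aux hG hij w w' z h)
    · exact Or.inr (cross_aux hG hij.symm w' w z h)
  · rintro z (rfl | rfl)
    · exact left_mem_Sset (corona_connected (H := H) hG) _ _
    · exact right_mem_Sset (corona_connected (H := H) hG) _ _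

lemma pair_le_finsum {α : Type*} [Fintype α] (g : α → ℝ) (hg : ∀ v, 0 ≤ g v) {S : Set α}
    {a b : α} (ha : a ∈ S) (hb : b ∈ S) (hab : a ≠ b) : g a + g b ≤ ∑ᶠ z ∈ S, g z := by
  classical
  have hS : S.Finite := S.toFinite
  rw [finsum_mem_eq_finite_toFinset_sum _ hS]
  have hsub : ({a, b} : Finset α) ⊆ hS.toFinset := by
    intro x hx
    rw [Finset.mem_insert, Finset.mem_singleton] at hx
    rcases hx with rfl | rfl <;> rw [Set.Finite.mem_toFinset] <;> assumption
  calc g a + g b = ∑ x ∈ ({a, b} : Finset α), g x := (Finset.sum_pair hab).symm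
    _ ≤ ∑ x ∈ hS.toFinset, g x :=
        Finset.sum_le_sum_of_subset_of_nonneg hsub (fun x _ _ => hg x)


lemma dist_inl_inr (hG : G.Connected) (i j : V) (w : W) :
    (corona G H).dist (inl i : V ⊕ V × W) (inr (j, w)) = 1 + G.dist i j := by
  rw [SimpleGraph.dist_comm (G := corona G H) (u := (inl i : V ⊕ V × W)) (v := inr (j, w)),
    corona_dist_inr_inl hG j w i, SimpleGraph.dist_comm (G := G) (u := j) (v := i)]

lemma inl_pair_mem (hG : G.Connected) {i j : V} (hij : i ≠ j) (w₀ : W) :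
    (inr (j, w₀) : V ⊕ V × W) ∈ Sset (corona G H) (inl i) (inl j) := by
  apply mid_mem_Sset (corona_connected (H := H) hG)
  rw [dist_inl_inr hG i j w₀, dist_inl_inr hG j j w₀, corona_dist_inl_inl hG i j, G.dist_self]
  omega

lemma mem_Sset_inr_inl_ne (hG : G.Connected) {i j : V} (hij : i ≠ j) (w w₀ : W) :
    (inr (j, w₀) : V ⊕ V × W) ∈ Sset (corona G H) (inr (i, w)) (inl j) := by
  apply mid_mem_Sset (corona_connected (H := H) hG)
  rw [corona_dist_inr_inr hG hij w w₀, corona_dist_inr_inl hG i w j,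
    dist_inl_inr hG j j w₀, G.dist_self]
  omega

lemma mem_Sset_inr_inl_eq (hG : G.Connected) {i k : V} (hk : k ≠ i) (w w₀ : W) :
    (inr (k, w₀) : V ⊕ V × W) ∈ Sset (corona G H) (inr (i, w)) (inl i) := by
  apply mid_mem_Sset (corona_connected (H := H) hG)
  rw [corona_dist_inr_inr hG (Ne.symm hk) w w₀, corona_dist_inr_inl hG i w i,
    dist_inl_inr hG i k w₀, G.dist_self,
    SimpleGraph.dist_comm (G := G) (u := i) (v := k)]
  omega

end CoronaAux

/-- Let `G` be connected of order `n ≥ 2` and `H` any graph of order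
`m ≥ 1`. Then `sdim_f(G ⊙ H) = nm/2`. -/
theorem sdimf_corona {V W : Type*} [Fintype V] [Fintype W]
    (G : SimpleGraph V) (H : SimpleGraph W)
    (hG : G.Connected) (hn : 2 ≤ Fintype.card V) (hm : 1 ≤ Fintype.card W) :
    sdimf (corona G H) = (Fintype.card V : ℝ) * (Fintype.card W : ℝ) / 2 := by
  classical
  open Sum in
  obtain ⟨w₀⟩ : Nonempty W := Fintype.card_pos_iff.mp (by omega)
  have hC : (corona G H).Connected := corona_connected (H := H) hG
  -- every `Sset` contains two distinct vertices of the copies of `H`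
  have key : ∀ x y : V ⊕ V × W, x ≠ y → ∃ a b : V × W,
      (inr a : V ⊕ V × W) ∈ Sset (corona G H) x y ∧
      (inr b : V ⊕ V × W) ∈ Sset (corona G H) x y ∧ a ≠ b := by
    rintro (i | ⟨i, w⟩) (j | ⟨j, w'⟩) hxy
    · have hij : i ≠ j := fun h => hxy (by rw [h])
      refine ⟨(j, w₀), (i, w₀), inl_pair_mem hG hij w₀, ?_, ?_⟩
      · rw [Sset_symm_s8]; exact inl_pair_mem hG hij.symm w₀
      · exact fun h => hij (congrArg Prod.fst h).symm
    · rw [Sset_symm_s8]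
      by_cases hji : j = i
      · subst hji
        obtain ⟨k, hk⟩ := Fintype.exists_ne_of_one_lt_card (by omega) j
        exact ⟨(j, w'), (k, w₀), left_mem_Sset hC _ _,
          mem_Sset_inr_inl_eq hG hk w' w₀, fun h => hk (congrArg Prod.fst h).symm⟩
      · exact ⟨(j, w'), (i, w₀), left_mem_Sset hC _ _,
          mem_Sset_inr_inl_ne hG hji w' w₀, fun h => hji (congrArg Prod.fst h)⟩
    · by_cases hji : i = j
      · subst hji
        obtain ⟨k, hk⟩ := Fintype.exists_ne_of_one_lt_card (by omega) i
        exact ⟨(i, w), (k, w₀), left_mem_Sset hC _ _,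
          mem_Sset_inr_inl_eq hG hk w w₀, fun h => hk (congrArg Prod.fst h).symm⟩
      · exact ⟨(i, w), (j, w₀), left_mem_Sset hC _ _,
          mem_Sset_inr_inl_ne hG hji w w₀, fun h => hji (congrArg Prod.fst h)⟩
    · have hne : ((i, w) : V × W) ≠ (j, w') := fun h => hxy (by rw [h])
      exact ⟨(i, w), (j, w'), left_mem_Sset hC _ _, right_mem_Sset hC _ _, hne⟩
  -- the witness function
  set g₀ : V ⊕ V × W → ℝ := Sum.elim (fun _ => 0) (fun _ => 1 / 2) with hg₀def
  have hg₀nn : ∀ v, 0 ≤ g₀ v := by rintro (a | p) <;> simp [hg₀def] <;> norm_num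
  have hSRF₀ : IsSRF (corona G H) g₀ := by
    refine ⟨fun v => ⟨hg₀nn v, ?_⟩, ?_⟩
    · rcases v with a | p <;> simp [hg₀def] <;> norm_num
    · intro x y hxy
      obtain ⟨a, b, ha, hb, hab⟩ := key x y hxy
      have h1 := pair_le_finsum g₀ hg₀nn ha hb (fun h => hab (Sum.inr.inj h))
      simp only [hg₀def, Sum.elim_inr] at h1
      linarith
  have hsum₀ : ∑ᶠ v, g₀ v = (Fintype.card V : ℝ) * (Fintype.card W : ℝ) / 2 := by
    rw [finsum_eq_sum_of_fintype, Fintype.sum_sum_type]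
    simp only [hg₀def, Sum.elim_inl, Sum.elim_inr, Finset.sum_const, Finset.card_univ,
      Fintype.card_prod, smul_eq_mul, nsmul_eq_mul, Finset.sum_const_zero]
    push_cast
    ring
  -- the lower bound
  have lb : ∀ g : (V ⊕ V × W) → ℝ, IsSRF (corona G H) g →
      (Fintype.card V : ℝ) * (Fintype.card W : ℝ) / 2 ≤ ∑ᶠ v, g v := by
    intro g hg
    obtain ⟨hg01, hgS⟩ := hg
    have pairineq : ∀ (i j : V), i ≠ j → ∀ w w' : W,
        1 ≤ g (inr (i, w)) + g (inr (j, w')) := by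
      intro i j hij w w'
      have h1 := hgS (inr (i, w)) (inr (j, w')) (fun h => hij (congrArg Prod.fst (Sum.inr.inj h)))
      rw [Sset_cross (H := H) hG hij w w',
        finsum_mem_pair (fun h => hij (congrArg Prod.fst (Sum.inr.inj h)))] at h1
      exact h1
    set S : V → ℝ := fun i => ∑ w : W, g (inr (i, w)) with hSdef
    set T : ℝ := ∑ i : V, S i with hTdef
    set n : ℝ := (Fintype.card V : ℝ) with hndef
    set m : ℝ := (Fintype.card W : ℝ) with hmdef
    have hn' : (2 : ℝ) ≤ n := by rw [hndef]; exact_mod_cast hn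
    have hm' : (1 : ℝ) ≤ m := by rw [hmdef]; exact_mod_cast hm
    have hSpair : ∀ i j, i ≠ j → m ≤ S i + S j := by
      intro i j hij
      calc m = ∑ _w : W, (1 : ℝ) := by
            rw [Finset.sum_const, Finset.card_univ, nsmul_eq_mul, mul_one]
        _ ≤ ∑ w : W, (g (inr (i, w)) + g (inr (j, w))) :=
            Finset.sum_le_sum (fun w _ => pairineq i j hij w w)
        _ = S i + S j := by rw [Finset.sum_add_distrib]
    have inner_eq : ∀ i : V, ∑ j ∈ Finset.univ.erase i, (S i + S j)
        = (n - 1) * S i + (T - S i) := by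
      intro i
      have hadd := Finset.add_sum_erase Finset.univ S (Finset.mem_univ i)
      rw [Finset.sum_add_distrib, Finset.sum_const,
        Finset.card_erase_of_mem (Finset.mem_univ i), Finset.card_univ, nsmul_eq_mul,
        Nat.cast_sub (by omega : 1 ≤ Fintype.card V)]
      push_cast
      rw [hTdef]
      linarith [hadd]
    have inner_ge : ∀ i : V, (n - 1) * m ≤ ∑ j ∈ Finset.univ.erase i, (S i + S j) := by
      intro i
      calc (n - 1) * m = ∑ _j ∈ Finset.univ.erase i, m := by
            rw [Finset.sum_const, Finset.card_erase_of_mem (Finset.mem_univ i),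
              Finset.card_univ, nsmul_eq_mul,
              Nat.cast_sub (by omega : 1 ≤ Fintype.card V)]
            push_cast
            ring
        _ ≤ _ := Finset.sum_le_sum
            (fun j hj => hSpair i j (Ne.symm (Finset.ne_of_mem_erase hj)))
    have big : n * ((n - 1) * m) ≤ (2 * n - 2) * T := by
      calc n * ((n - 1) * m) = ∑ _i : V, (n - 1) * m := by
            rw [Finset.sum_const, Finset.card_univ, nsmul_eq_mul, hndef]
        _ ≤ ∑ i : V, ∑ j ∈ Finset.univ.erase i, (S i + S j) :=
            Finset.sum_le_sum (fun i _ => inner_ge i)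
        _ = ∑ i : V, ((n - 1) * S i + (T - S i)) := by
            exact Finset.sum_congr rfl (fun i _ => inner_eq i)
        _ = (2 * n - 2) * T := by
            rw [Finset.sum_add_distrib, ← Finset.mul_sum, Finset.sum_sub_distrib,
              Finset.sum_const, Finset.card_univ, nsmul_eq_mul, ← hTdef, ← hndef]
            ring
    have hTge : n * m / 2 ≤ T := by
      have h1 : 0 ≤ (n - 1) * (2 * T - n * m) := by nlinarith [big]
      have h2 : 0 ≤ 2 * T - n * m := by
        by_contra hcon
        push_neg at hcon
        nlinarith
      linarith
    have htotal : ∑ᶠ v, g v = ∑ a : V, g (inl a) + ∑ p : V × W, g (inr p) := by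
      rw [finsum_eq_sum_of_fintype, Fintype.sum_sum_type]
    have hT2 : ∑ p : V × W, g (inr p) = T := by
      rw [hTdef, Fintype.sum_prod_type]
    have hinl : (0 : ℝ) ≤ ∑ a : V, g (inl a) :=
      Finset.sum_nonneg (fun a _ => (hg01 (inl a)).1)
    rw [htotal, hT2]
    calc (Fintype.card V : ℝ) * (Fintype.card W : ℝ) / 2 = n * m / 2 := by
          rw [hndef, hmdef]
      _ ≤ T := hTge
      _ ≤ ∑ a : V, g (inl a) + T := by linarith
  -- conclusion
  have hmemQ : (Fintype.card V : ℝ) * (Fintype.card W : ℝ) / 2 ∈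
      {s : ℝ | ∃ g : (V ⊕ V × W) → ℝ, IsSRF (corona G H) g ∧ s = ∑ᶠ v, g v} :=
    ⟨g₀, hSRF₀, hsum₀.symm⟩
  have hlbQ : ∀ s ∈ {s : ℝ | ∃ g : (V ⊕ V × W) → ℝ, IsSRF (corona G H) g ∧ s = ∑ᶠ v, g v},
      (Fintype.card V : ℝ) * (Fintype.card W : ℝ) / 2 ≤ s := by
    rintro s ⟨g, hg, rfl⟩
    exact lb g hg
  rw [sdimf]
  exact le_antisymm (csInf_le ⟨_, hlbQ⟩ hmemQ) (le_csInf ⟨_, hmemQ⟩ hlbQ)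
end

section
/- Let G be a connected graph of order n ≥ 2. Then (a) sdim_f(G[K_m]) = nm/2 for every m ≥ 2, where K_m is the complete graph on m vertices; (b) sdim_f(G[C_m]) = nm/2 for every m ≥ 3, where C_m is the cycle on m vertices; and (c) sdim_f(G[P_m]) = nm/2 for every m ≥ 2 with m ≠ 3, where P_m is the path on m vertices. -/
open SimpleGraph

section AuxSdimf

variable {V : Type*} {W : Type*}

/-- Every vertex of a connected graph on at least two vertices has a neighbor. -/
lemma exists_adj_of_connected' [Fintype V] {G : SimpleGraph V} (hG : G.Connected)
    (hn : 2 ≤ Fintype.card V) (u : V) : ∃ w, G.Adj u w := by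
  obtain ⟨v, hv⟩ := Fintype.exists_ne_of_one_lt_card (by omega) u
  obtain ⟨p⟩ := hG u v
  cases p with
  | nil => exact absurd rfl hv.symm
  | cons h q => exact ⟨_, h⟩

lemma lexProd_reachable_aux {G : SimpleGraph V} (H : SimpleGraph W)
    (hadj : ∀ u : V, ∃ w, G.Adj u w) :
    ∀ {u u' : V}, G.Walk u u' → ∀ i k : W, (lexProd G H).Reachable (u, i) (u', k) := by
  intro u u' p
  induction p with
  | nil =>
    rename_i a
    intro i k
    by_cases hik : i = k
    · subst hik; exact Reachable.refl _
    · obtain ⟨w, hw⟩ := hadj a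
      exact Reachable.trans
        ⟨Walk.cons (show (lexProd G H).Adj (a, i) (w, i) from Or.inl hw) Walk.nil⟩
        ⟨Walk.cons (show (lexProd G H).Adj (w, i) (a, k) from Or.inl hw.symm) Walk.nil⟩
  | cons h _ ih =>
    intro i k
    exact Reachable.trans ⟨Walk.cons (Or.inl h) Walk.nil⟩ (ih i k)

lemma left_mem_Sset_s12 {G : SimpleGraph V} {x y : V} (h : G.Reachable y x) :
    x ∈ Sset G x y := by
  obtain ⟨p, hp⟩ := h.exists_walk_length_eq_dist
  exact Or.inl ⟨p, hp, p.end_mem_support⟩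

lemma right_mem_Sset_s12 {G : SimpleGraph V} {x y : V} (h : G.Reachable x y) :
    y ∈ Sset G x y := by
  obtain ⟨p, hp⟩ := h.exists_walk_length_eq_dist
  exact Or.inr ⟨p, hp, p.end_mem_support⟩

/-- A one-sided "goodness" condition on a pair of vertices of `H`: either they are
nonadjacent, or every neighbor of `i` is `j` or a neighbor of `j`. -/
def Good (H : SimpleGraph W) (i j : W) : Prop :=
  ¬ H.Adj i j ∨ ∀ k, H.Adj i k → k = j ∨ H.Adj j k

lemma no_shortest_through {G : SimpleGraph V} {H : SimpleGraph W}
    {u u₀ : V} (hu₀ : G.Adj u u₀) {i j : W} (hij : i ≠ j) (hgood : Good H i j)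
    {z : V × W} (hzx : z ≠ (u, i)) (hzy : z ≠ (u, j))
    (p : (lexProd G H).Walk (u, j) z) (hlen : p.length = (lexProd G H).dist (u, j) z)
    (hmem : (u, i) ∈ p.support) : False := by
  classical
  have hxy : ((u, j) : V × W) ≠ (u, i) := fun h => hij (congrArg Prod.snd h).symm
  set q := p.takeUntil _ hmem with hqdef
  set r := p.dropUntil _ hmem with hrdef
  have hsum : q.length + r.length = p.length := by
    have := congrArg Walk.length (p.take_spec hmem)
    rwa [Walk.length_append] at this
  have hq1 : q.length ≠ 0 := fun h0 => hxy (Walk.eq_of_length_eq_zero h0)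
  have hr1 : ((u, i) : V × W) ≠ z := fun h => hzx h.symm
  obtain ⟨w, hadj, r', hr'⟩ := Walk.exists_eq_cons_of_ne hr1 r
  have hrlen : r.length = r'.length + 1 := by rw [hr']; simp
  obtain ⟨w1, w2⟩ := w
  suffices hW : ∃ q' : (lexProd G H).Walk (u, j) z, q'.length < p.length by
    obtain ⟨q', hq'⟩ := hW
    have hd := dist_le q'
    rw [← hlen] at hd
    omega
  have hadj' : G.Adj u w1 ∨ (u = w1 ∧ H.Adj i w2) := hadj
  rcases hadj' with h1 | ⟨h2, h3⟩
  · refine ⟨Walk.cons (show (lexProd G H).Adj (u, j) (w1, w2) from Or.inl h1) r', ?_⟩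
    simp only [Walk.length_cons]
    omega
  · subst h2
    rcases hgood with hnadj | htwin
    · have hq2 : 2 ≤ q.length := by
        rcases Nat.lt_or_ge q.length 2 with h | h
        · exfalso
          have hone : q.length = 1 := by omega
          have : G.Adj u u ∨ (u = u ∧ H.Adj j i) := Walk.adj_of_length_eq_one hone
          rcases this with hg | ⟨_, hh⟩
          · exact G.irrefl hg
          · exact hnadj hh.symm
        · exact h
      refine ⟨Walk.cons (show (lexProd G H).Adj (u, j) (u₀, j) from Or.inl hu₀)
        (Walk.cons (show (lexProd G H).Adj (u₀, j) (u, w2) from Or.inl hu₀.symm) r'), ?_⟩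
      simp only [Walk.length_cons]
      omega
    · rcases htwin w2 h3 with rfl | hjw
      · exact ⟨r', by omega⟩
      · refine ⟨Walk.cons (show (lexProd G H).Adj (u, j) (u, w2) from Or.inr ⟨rfl, hjw⟩) r', ?_⟩
        simp only [Walk.length_cons]
        omega

lemma Sset_subset_pair {G : SimpleGraph V} {H : SimpleGraph W}
    {u u₀ : V} (hu₀ : G.Adj u u₀) {i j : W} (hij : i ≠ j)
    (hg1 : Good H i j) (hg2 : Good H j i) :
    Sset (lexProd G H) (u, i) (u, j) ⊆ {(u, i), (u, j)} := by
  intro z hz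
  by_contra hzmem
  simp only [Set.mem_insert_iff, Set.mem_singleton_iff, not_or] at hzmem
  obtain ⟨hz1, hz2⟩ := hzmem
  rcases hz with ⟨p, hl, hm⟩ | ⟨p, hl, hm⟩
  · exact no_shortest_through hu₀ hij hg1 hz1 hz2 p hl hm
  · exact no_shortest_through hu₀ hij.symm hg2 hz2 hz1 p hl hm

lemma finsum_mem_le_pair {α : Type*} {g : α → ℝ} [Finite α] (hg : ∀ v, 0 ≤ g v)
    {S : Set α} {a b : α} (hab : a ≠ b) (hS : S ⊆ {a, b}) :
    ∑ᶠ z ∈ S, g z ≤ g a + g b := by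
  classical
  have hfin : S.Finite := Set.toFinite S
  rw [finsum_mem_eq_finite_toFinset_sum g hfin]
  have hsub : hfin.toFinset ⊆ {a, b} := by
    intro x hx
    have := hS (hfin.mem_toFinset.mp hx)
    simpa using this
  calc ∑ z ∈ hfin.toFinset, g z ≤ ∑ z ∈ ({a, b} : Finset α), g z :=
        Finset.sum_le_sum_of_subset_of_nonneg hsub fun x _ _ => hg x
    _ = g a + g b := Finset.sum_pair hab

/-- The main parametrized computation of `sdimf (lexProd G H)`. -/
lemma sdimf_lexProd_eq [Fintype V] [Fintype W]
    (G : SimpleGraph V) (H : SimpleGraph W) (hG : G.Connected) (hn : 2 ≤ Fintype.card V)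
    (π : W → W) (hbij : Function.Bijective π)
    (hke : ∀ k, k ≠ π k) (hgood : ∀ k, Good H k (π k) ∧ Good H (π k) k) :
    sdimf (lexProd G H) = (Fintype.card V : ℝ) * (Fintype.card W : ℝ) / 2 := by
  classical
  set L := lexProd G H with hL
  have hadjall : ∀ u : V, ∃ w, G.Adj u w := exists_adj_of_connected' hG hn
  have hreach : ∀ x y : V × W, L.Reachable x y := by
    rintro ⟨u, i⟩ ⟨u', k⟩
    obtain ⟨p⟩ := hG u u'
    exact lexProd_reachable_aux H hadjall p i k
  -- Lower bound for every SRF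
  have key : ∀ g : V × W → ℝ, IsSRF L g →
      (Fintype.card V : ℝ) * (Fintype.card W : ℝ) / 2 ≤ ∑ᶠ v, g v := by
    intro g hgSRF
    obtain ⟨hg01, hgc⟩ := hgSRF
    have fiber : ∀ u : V, (Fintype.card W : ℝ) / 2 ≤ ∑ w : W, g (u, w) := by
      intro u
      obtain ⟨u₀, hu₀⟩ := hadjall u
      have hky : ∀ k : W, 1 ≤ g (u, k) + g (u, π k) := by
        intro k
        have hne : ((u, k) : V × W) ≠ (u, π k) :=
          fun h => hke k (congrArg Prod.snd h)
        have h1 := hgc (u, k) (u, π k) hne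
        have h2 := finsum_mem_le_pair (fun v => (hg01 v).1) hne
          (Sset_subset_pair hu₀ (hke k) (hgood k).1 (hgood k).2)
        linarith
      have hsum1 : (Fintype.card W : ℝ) ≤ ∑ k : W, (g (u, k) + g (u, π k)) := by
        calc (Fintype.card W : ℝ) = ∑ _k : W, (1 : ℝ) := by simp
          _ ≤ _ := Finset.sum_le_sum fun k _ => hky k
      have hsum2 : ∑ k : W, (g (u, k) + g (u, π k)) = 2 * ∑ k : W, g (u, k) := by
        rw [Finset.sum_add_distrib,
          Fintype.sum_bijective π hbij (fun k => g (u, π k)) (fun k => g (u, k))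
            (fun k => rfl)]
        ring
      rw [hsum2] at hsum1
      linarith
    rw [finsum_eq_sum_of_fintype, Fintype.sum_prod_type]
    calc (Fintype.card V : ℝ) * (Fintype.card W : ℝ) / 2
        = ∑ _u : V, ((Fintype.card W : ℝ) / 2) := by
          rw [Finset.sum_const, Finset.card_univ, nsmul_eq_mul]; ring
      _ ≤ ∑ u : V, ∑ w : W, g (u, w) := Finset.sum_le_sum fun u _ => fiber u
  -- The constant 1/2 function is an SRF
  have hSRF : IsSRF L (fun _ => (1 / 2 : ℝ)) := by
    constructor
    · intro v; norm_num
    · intro x y hxy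
      have hx : x ∈ Sset L x y := left_mem_Sset_s12 (hreach y x)
      have hy : y ∈ Sset L x y := right_mem_Sset_s12 (hreach x y)
      have hfin : (Sset L x y).Finite := Set.toFinite _
      rw [finsum_mem_eq_finite_toFinset_sum _ hfin]
      have hsub : ({x, y} : Finset (V × W)) ⊆ hfin.toFinset := by
        intro z hz
        rcases Finset.mem_insert.mp hz with rfl | hz
        · exact hfin.mem_toFinset.mpr hx
        · rw [Finset.mem_singleton] at hz; subst hz
          exact hfin.mem_toFinset.mpr hy
      calc (1 : ℝ) = ∑ _z ∈ ({x, y} : Finset (V × W)), (1 / 2 : ℝ) := by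
            rw [Finset.sum_pair hxy]; norm_num
        _ ≤ _ := Finset.sum_le_sum_of_subset_of_nonneg hsub fun z _ _ => by norm_num
  have hmem : (Fintype.card V : ℝ) * (Fintype.card W : ℝ) / 2 ∈
      {s : ℝ | ∃ g : V × W → ℝ, IsSRF L g ∧ s = ∑ᶠ v, g v} := by
    refine ⟨fun _ => (1 / 2 : ℝ), hSRF, ?_⟩
    rw [finsum_eq_sum_of_fintype, Finset.sum_const, Finset.card_univ, nsmul_eq_mul,
      Fintype.card_prod]
    push_cast
    ring
  refine le_antisymm
    (csInf_le ⟨(Fintype.card V : ℝ) * (Fintype.card W : ℝ) / 2, ?_⟩ hmem)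
    (le_csInf ⟨_, hmem⟩ ?_) <;>
    · rintro s ⟨g, hg, rfl⟩
      exact key g hg

end AuxSdimf



section Instantiations

lemma good_top {W : Type*} (i j : W) : Good (⊤ : SimpleGraph W) i j := by
  right
  intro k hk
  by_cases h : k = j
  · exact Or.inl h
  · exact Or.inr ((top_adj _ _).mpr fun hh => h hh.symm)

lemma good_of_two {H : SimpleGraph (Fin 2)} {i j : Fin 2} (hij : i ≠ j) : Good H i j := by
  right
  intro l hl
  left
  have h1 : l.val ≠ i.val := fun hh => hl.ne' (Fin.ext hh)
  have h2 : i.val ≠ j.val := fun hh => hij (Fin.ext hh)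
  have := l.isLt
  have := i.isLt
  have := j.isLt
  exact Fin.ext (by omega)

lemma mk_ne_zero' {m : ℕ} [NeZero m] {a : ℕ} (ha : a ≠ 0) (h : a < m) :
    (⟨a, h⟩ : Fin m) ≠ 0 := by
  simp [Fin.ext_iff, ha]

lemma ne_add_of_ne_zero {m : ℕ} [NeZero m] {c : Fin m} (hc : c ≠ 0) (k : Fin m) :
    k ≠ k + c :=
  fun h => hc (left_eq_add.mp h)

lemma cycle_nonadj {m : ℕ} (hm : 4 ≤ m) (k : Fin m) :
    ¬ (cycleGraph m).Adj k (k + ⟨2, by omega⟩) := by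
  haveI : NeZero m := ⟨by omega⟩
  intro h
  rw [cycleGraph_adj'] at h
  set c : Fin m := ⟨2, by omega⟩ with hc
  have e1 : (k + c) - k = c := add_sub_cancel_left k c
  have e2 : k - (k + c) = -c := by rw [sub_add_eq_sub_sub, sub_self, zero_sub]
  have hneg : ((-c : Fin m) : ℕ) = (m - 2) % m := by rw [Fin.neg_def]
  have hmod : (m - 2) % m = m - 2 := Nat.mod_eq_of_lt (by omega)
  have hcval : (c : ℕ) = 2 := rfl
  rcases h with h | h
  · rw [e2] at h
    omega
  · rw [e1] at h
    omega

lemma path_nonadj {m : ℕ} (hm : 4 ≤ m) (k : Fin m) :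
    ¬ (pathGraph m).Adj k (k + ⟨2, by omega⟩) := by
  intro h
  rw [pathGraph_adj] at h
  have hval : ((k + (⟨2, by omega⟩ : Fin m)) : Fin m).val = (k.val + 2) % m :=
    Fin.val_add _ _
  have hk := k.isLt
  rcases Nat.lt_or_ge (k.val + 2) m with h2 | h2
  · rw [Nat.mod_eq_of_lt h2] at hval
    omega
  · have hmod : (k.val + 2) % m = k.val + 2 - m := by
      rw [Nat.mod_eq_sub_mod h2, Nat.mod_eq_of_lt (by omega)]
    rw [hmod] at hval
    omega

end Instantiations

/-- Let `G` be a connected graph of order `n ≥ 2`. Then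
(a) `sdim_f(G[K_m]) = nm/2` for `m ≥ 2`;
(b) `sdim_f(G[C_m]) = nm/2` for `m ≥ 3`;
(c) `sdim_f(G[P_m]) = nm/2` for `m ≥ 2`, `m ≠ 3`. -/
theorem sdimf_lexProd_complete_cycle_path {V : Type*} [Fintype V] (G : SimpleGraph V)
    (hG : G.Connected) (hn : 2 ≤ Fintype.card V) :
    (∀ m : ℕ, 2 ≤ m →
      sdimf (lexProd G (⊤ : SimpleGraph (Fin m))) = (Fintype.card V : ℝ) * m / 2) ∧
    (∀ m : ℕ, 3 ≤ m →
      sdimf (lexProd G (SimpleGraph.cycleGraph m)) = (Fintype.card V : ℝ) * m / 2) ∧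
    (∀ m : ℕ, 2 ≤ m → m ≠ 3 →
      sdimf (lexProd G (SimpleGraph.pathGraph m)) = (Fintype.card V : ℝ) * m / 2) := by
  have htop : ∀ m : ℕ, 2 ≤ m →
      sdimf (lexProd G (⊤ : SimpleGraph (Fin m))) = (Fintype.card V : ℝ) * m / 2 := by
    intro m hm
    haveI : NeZero m := ⟨by omega⟩
    have h1m : 1 < m := by omega
    have hke : ∀ k : Fin m, k ≠ k + ⟨1, h1m⟩ :=
      ne_add_of_ne_zero (mk_ne_zero' one_ne_zero h1m)
    have hbij : Function.Bijective (fun k : Fin m => k + ⟨1, h1m⟩) :=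
      (Equiv.addRight (⟨1, h1m⟩ : Fin m)).bijective
    rw [sdimf_lexProd_eq G _ hG hn _ hbij hke
      (fun k => ⟨good_top _ _, good_top _ _⟩), Fintype.card_fin]
  refine ⟨htop, ?_, ?_⟩
  · intro m hm
    by_cases hm4 : 4 ≤ m
    · haveI : NeZero m := ⟨by omega⟩
      have h2m : 2 < m := by omega
      have hke : ∀ k : Fin m, k ≠ k + ⟨2, h2m⟩ :=
        ne_add_of_ne_zero (mk_ne_zero' two_ne_zero h2m)
      have hbij : Function.Bijective (fun k : Fin m => k + ⟨2, h2m⟩) :=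
        (Equiv.addRight (⟨2, h2m⟩ : Fin m)).bijective
      rw [sdimf_lexProd_eq G _ hG hn _ hbij hke
        (fun k => ⟨Or.inl (cycle_nonadj hm4 k),
          Or.inl fun h => cycle_nonadj hm4 k h.symm⟩), Fintype.card_fin]
    · have hm3 : m = 3 := by omega
      subst hm3
      rw [cycleGraph_three_eq_top]
      exact htop 3 (by norm_num)
  · intro m hm hm3
    by_cases hm4 : 4 ≤ m
    · haveI : NeZero m := ⟨by omega⟩
      have h2m : 2 < m := by omega
      have hke : ∀ k : Fin m, k ≠ k + ⟨2, h2m⟩ :=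
        ne_add_of_ne_zero (mk_ne_zero' two_ne_zero h2m)
      have hbij : Function.Bijective (fun k : Fin m => k + ⟨2, h2m⟩) :=
        (Equiv.addRight (⟨2, h2m⟩ : Fin m)).bijective
      rw [sdimf_lexProd_eq G _ hG hn _ hbij hke
        (fun k => ⟨Or.inl (path_nonadj hm4 k),
          Or.inl fun h => path_nonadj hm4 k h.symm⟩), Fintype.card_fin]
    · have hm2 : m = 2 := by omega
      subst hm2
      haveI : NeZero 2 := ⟨by omega⟩
      have hke := ne_add_of_ne_zero (m := 2) (mk_ne_zero' (a := 1) one_ne_zero (by omega))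
      rw [sdimf_lexProd_eq G _ hG hn (fun k => k + ⟨1, by omega⟩)
        (Equiv.addRight (⟨1, by omega⟩ : Fin 2)).bijective hke
        (fun k => ⟨good_of_two (hke k), good_of_two (hke k).symm⟩), Fintype.card_fin]
end

section
/- Let G and H be connected graphs of order at least two. Then sdim_f(G □ H) ≥ 2 · ν(G_SR) · ν(H_SR), where ν denotes the matching number. -/
open SimpleGraph

lemma aux_walk_length_ge {V W : Type*} {G : SimpleGraph V} {H : SimpleGraph W}
    (hG : G.Connected) (hH : H.Connected) :
    ∀ {p q : V × W} (w : (G.boxProd H).Walk p q),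
      G.dist p.1 q.1 + H.dist p.2 q.2 ≤ w.length := by
  intro p q w
  induction w with
  | nil => simp [SimpleGraph.dist_self]
  | @cons a r b h w ih =>
    rw [Walk.length_cons]
    rcases (boxProd_adj.mp h) with ⟨h1, h2⟩ | ⟨h1, h2⟩
    · have t1 : G.dist a.1 b.1 ≤ G.dist a.1 r.1 + G.dist r.1 b.1 := hG.dist_triangle
      have t2 : G.dist a.1 r.1 = 1 := dist_eq_one_iff_adj.mpr h1
      have t3 : H.dist a.2 b.2 = H.dist r.2 b.2 := by rw [h2]
      omega
    · have t1 : H.dist a.2 b.2 ≤ H.dist a.2 r.2 + H.dist r.2 b.2 := hH.dist_triangle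
      have t2 : H.dist a.2 r.2 = 1 := dist_eq_one_iff_adj.mpr h1
      have t3 : G.dist a.1 b.1 = G.dist r.1 b.1 := by rw [h2]
      omega

lemma aux_dist_boxProd {V W : Type*} {G : SimpleGraph V} {H : SimpleGraph W}
    (hG : G.Connected) (hH : H.Connected) (p q : V × W) :
    (G.boxProd H).dist p q = G.dist p.1 q.1 + H.dist p.2 q.2 := by
  refine le_antisymm ?_ ?_
  · obtain ⟨w1, hw1⟩ := hG.exists_walk_length_eq_dist p.1 q.1
    obtain ⟨w2, hw2⟩ := hH.exists_walk_length_eq_dist p.2 q.2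
    have := SimpleGraph.dist_le ((w1.boxProdLeft H p.2).append (w2.boxProdRight G q.1))
    have l1 : (w1.boxProdLeft H p.2).length = w1.length := Walk.length_map _ _
    have l2 : (w2.boxProdRight G q.1).length = w2.length := Walk.length_map _ _
    rw [Walk.length_append, l1, l2, hw1, hw2] at this
    exact this
  · obtain ⟨w, hw⟩ := ((hG.boxProd hH).exists_walk_length_eq_dist p q)
    rw [← hw]
    exact aux_walk_length_ge hG hH w

lemma aux_mmd_boxProd {V W : Type*} {G : SimpleGraph V} {H : SimpleGraph W}
    (hG : G.Connected) (hH : H.Connected) {u v : V} {x y : W}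
    (h1 : MMD G u v) (h2 : MMD H x y) : MMD (G.boxProd H) (u, x) (v, y) := by
  refine ⟨fun h => h1.1 (congrArg Prod.fst h), ?_, ?_⟩
  · intro w hw
    rw [aux_dist_boxProd hG hH, aux_dist_boxProd hG hH]
    dsimp only
    rcases (boxProd_adj.mp hw) with ⟨ha, he⟩ | ⟨ha, he⟩
    · have := h1.2.1 w.1 ha
      have : H.dist w.2 y = H.dist x y := by rw [← he]
      omega
    · have := h2.2.1 w.2 ha
      have : G.dist w.1 v = G.dist u v := by rw [← he]
      omega
  · intro w hw
    rw [aux_dist_boxProd hG hH, aux_dist_boxProd hG hH]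
    dsimp only
    rcases (boxProd_adj.mp hw) with ⟨ha, he⟩ | ⟨ha, he⟩
    · have := h1.2.2 w.1 ha
      have : H.dist w.2 x = H.dist y x := by rw [← he]
      omega
    · have := h2.2.2 w.2 ha
      have : G.dist w.1 u = G.dist v u := by rw [← he]
      omega

lemma aux_end_eq {V : Type*} {G : SimpleGraph V} (hc : G.Connected)
    {a b : V} (h : MMD G a b) {z : V} (p : G.Walk b z)
    (hp : p.length = G.dist b z) (ha : a ∈ p.support) : z = a := by
  classical
  by_contra hz
  have hspec := p.take_spec ha
  have hlen : (p.takeUntil a ha).length + (p.dropUntil a ha).length = p.length := by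
    conv_rhs => rw [← hspec]
    rw [Walk.length_append]
  have hq1 := SimpleGraph.dist_le (p.takeUntil a ha)
  have hq2 := SimpleGraph.dist_le (p.dropUntil a ha)
  generalize hr : p.dropUntil a ha = r at hq2 hlen
  cases r with
  | nil => exact hz rfl
  | @cons _ c _ hadj r' =>
    have h4 := SimpleGraph.dist_le r'
    have h5 : G.dist c b ≤ G.dist a b := h.2.1 c hadj
    have h6 : G.dist b z ≤ G.dist b c + G.dist c z := hc.dist_triangle
    have hc1 : G.dist a b = G.dist b a := SimpleGraph.dist_comm
    have hc2 : G.dist b c = G.dist c b := SimpleGraph.dist_comm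
    rw [Walk.length_cons] at hlen
    omega

lemma aux_Sset_eq_pair {V : Type*} {G : SimpleGraph V} (hc : G.Connected)
    {a b : V} (h : MMD G a b) : Sset G a b = {a, b} := by
  ext z
  constructor
  · rintro (⟨p, hp, hmem⟩ | ⟨p, hp, hmem⟩)
    · exact Or.inl (aux_end_eq hc h p hp hmem)
    · exact Or.inr (aux_end_eq hc ⟨h.1.symm, h.2.2, h.2.1⟩ p hp hmem)
  · rintro (rfl | rfl)
    · obtain ⟨p, hp⟩ := hc.exists_walk_length_eq_dist b z
      exact Or.inl ⟨p, hp, p.end_mem_support⟩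
    · obtain ⟨p, hp⟩ := hc.exists_walk_length_eq_dist a z
      exact Or.inr ⟨p, hp, p.end_mem_support⟩

lemma aux_matchNum_exists {V : Type*} [Fintype V] (G' : SimpleGraph V) :
    ∃ M : G'.Subgraph, M.IsMatching ∧ M.edgeSet.ncard = matchNum G' := by
  have hne : {n : ℕ | ∃ M : G'.Subgraph, M.IsMatching ∧ M.edgeSet.ncard = n}.Nonempty := by
    refine ⟨0, ⊥, fun v hv => ?_, by simp [Subgraph.edgeSet_bot]⟩
    simp only [Subgraph.verts_bot, Set.mem_empty_iff_false] at hv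
  have hbdd : BddAbove {n : ℕ | ∃ M : G'.Subgraph, M.IsMatching ∧ M.edgeSet.ncard = n} := by
    refine ⟨Nat.card (Sym2 V), ?_⟩
    rintro n ⟨M, hM, rfl⟩
    calc M.edgeSet.ncard ≤ (Set.univ : Set (Sym2 V)).ncard :=
          Set.ncard_le_ncard (Set.subset_univ _) Set.finite_univ
      _ = Nat.card (Sym2 V) := Set.ncard_univ _
  have := Nat.sSup_mem hne hbdd
  obtain ⟨M, hM, hcard⟩ := this
  exact ⟨M, hM, hcard⟩

lemma aux_two_mul_edges_le_verts {V : Type*} [Fintype V] {G' : SimpleGraph V}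
    {M : G'.Subgraph} (hM : M.IsMatching) : 2 * M.edgeSet.ncard ≤ M.verts.ncard := by
  classical
  have hrep : ∀ e : M.edgeSet, ∃ a b, (e : Sym2 V) = s(a, b) ∧ M.Adj a b := by
    rintro ⟨e, he⟩
    induction e using Sym2.ind with
    | _ a b => exact ⟨a, b, rfl, he⟩
  choose f1 f2 hs hadj using hrep
  have key : ∀ (e e' : M.edgeSet) (v : V),
      (∃ w, M.Adj v w ∧ (e : Sym2 V) = s(v, w)) →
      (∃ w, M.Adj v w ∧ (e' : Sym2 V) = s(v, w)) → e = e' := by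
    rintro e e' v ⟨w, hw, he⟩ ⟨w', hw', he'⟩
    have hu := hM (M.edge_vert hw)
    have h1 := hu.unique hw hw'
    exact Subtype.ext (by rw [he, he', h1])
  set F : M.edgeSet × Bool → M.verts := fun p =>
    if p.2 then ⟨f1 p.1, M.edge_vert (hadj p.1)⟩
    else ⟨f2 p.1, M.edge_vert (hadj p.1).symm⟩ with hF
  have hne : ∀ e : M.edgeSet, f1 e ≠ f2 e := fun e => (M.adj_sub (hadj e)).ne
  have hinj : Function.Injective F := by
    rintro ⟨e, i⟩ ⟨e', j⟩ hEq
    have hv := congrArg Subtype.val hEq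
    have w1 : ∀ (e : M.edgeSet) (i : Bool), ∃ w, M.Adj ((F (e, i)) : V) w ∧
        (e : Sym2 V) = s(((F (e, i)) : V), w) := by
      intro e i
      cases i with
      | true => exact ⟨f2 e, by simp [hF, hadj e], by simp [hF, hs e]⟩
      | false => exact ⟨f1 e, by simp [hF, (hadj e).symm], by
          simp [hF]
          rw [hs e, Sym2.eq_swap]⟩
    have hee : e = e' := by
      refine key e e' (F (e, i) : V) (w1 e i) ?_
      have := w1 e' j
      rwa [← hEq] at this
    subst hee
    have hij : i = j := by
      cases i <;> cases j
      · rfl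
      · exact absurd (hv : f2 e = f1 e).symm (hne e)
      · exact absurd (hv : f1 e = f2 e) (hne e)
      · rfl
    rw [hij]
  have hcard := Nat.card_le_card_of_injective F hinj
  rw [Nat.card_prod, Nat.card_eq_fintype_card (α := Bool), Fintype.card_bool] at hcard
  rw [Nat.card_coe_set_eq, Nat.card_coe_set_eq] at hcard
  omega

lemma aux_isSRF_one {V : Type*} [Fintype V] {G : SimpleGraph V} (hc : G.Connected) :
    IsSRF G (fun _ => (1 : ℝ)) := by
  refine ⟨fun v => ⟨zero_le_one, le_refl 1⟩, fun x y hxy => ?_⟩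
  have hx : x ∈ Sset G x y := by
    obtain ⟨p, hp⟩ := hc.exists_walk_length_eq_dist y x
    exact Or.inl ⟨p, hp, p.end_mem_support⟩
  have hfin := (Sset G x y).toFinite
  rw [← hfin.coe_toFinset, finsum_mem_coe_finset]
  have hxm : x ∈ hfin.toFinset := hfin.mem_toFinset.mpr hx
  have h := Finset.single_le_sum (f := fun _ : V => (1 : ℝ)) (fun i _ => zero_le_one) hxm
  simpa using h

lemma aux_partner {V : Type*} {G' : SimpleGraph V} {M : G'.Subgraph} (hM : M.IsMatching) :
    ∃ m : V → V, (∀ a ∈ M.verts, M.Adj a (m a)) ∧ (∀ a ∈ M.verts, m a ∈ M.verts)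
      ∧ (∀ a ∈ M.verts, m (m a) = a) := by
  classical
  set m : V → V := fun a => if h : a ∈ M.verts then (hM h).choose else a with hm
  have h1 : ∀ a (h : a ∈ M.verts), M.Adj a (m a) := by
    intro a h
    simp only [hm, dif_pos h]
    exact (hM h).choose_spec.1
  have h2 : ∀ a ∈ M.verts, m a ∈ M.verts := fun a h => M.edge_vert (h1 a h).symm
  have h3 : ∀ a ∈ M.verts, m (m a) = a := by
    intro a h
    have h' := h2 a h
    exact (hM h').unique (h1 _ h') (h1 a h).symm
  exact ⟨m, fun a h => h1 a h, h2, h3⟩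

/-- Let `G` and `H` be connected graphs of order at least two. Then
`sdim_f(G □ H) ≥ 2·ν(G_SR)·ν(H_SR)`. -/
theorem sdimf_boxProd_ge_two_mul_matchNums {V W : Type*} [Fintype V] [Fintype W]
    (G : SimpleGraph V) (H : SimpleGraph W)
    (hG : G.Connected) (hH : H.Connected)
    (hn : 2 ≤ Fintype.card V) (hm : 2 ≤ Fintype.card W) :
    2 * (matchNum (SRGraph G) : ℝ) * (matchNum (SRGraph H) : ℝ)
      ≤ sdimf (G.boxProd H) := by
  classical
  obtain ⟨M, hM, hMcard⟩ := aux_matchNum_exists (SRGraph G)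
  obtain ⟨N, hN, hNcard⟩ := aux_matchNum_exists (SRGraph H)
  obtain ⟨m, hm1, hm2, hm3⟩ := aux_partner hM
  obtain ⟨n, hn1, hn2, hn3⟩ := aux_partner hN
  have hGH : (G.boxProd H).Connected := hG.boxProd hH
  apply le_csInf
  · exact ⟨∑ᶠ v, (fun _ : V × W => (1 : ℝ)) v, fun _ => 1, aux_isSRF_one hGH, rfl⟩
  rintro s ⟨g, ⟨hg01, hgS⟩, rfl⟩
  have key : ∀ a ∈ M.verts, ∀ b ∈ N.verts, 1 ≤ g (a, b) + g (m a, n b) := by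
    intro a ha b hb
    have hmmdG : MMD G a (m a) := M.adj_sub (hm1 a ha)
    have hmmdH : MMD H b (n b) := N.adj_sub (hn1 b hb)
    have hmmd : MMD (G.boxProd H) (a, b) (m a, n b) := aux_mmd_boxProd hG hH hmmdG hmmdH
    have hne : (a, b) ≠ (m a, n b) := hmmd.1
    have h := hgS _ _ hne
    rwa [aux_Sset_eq_pair hGH hmmd, finsum_mem_pair hne] at h
  set A : Finset (V × W) := M.verts.toFinset ×ˢ N.verts.toFinset with hA
  have memA : ∀ p : V × W, p ∈ A ↔ p.1 ∈ M.verts ∧ p.2 ∈ N.verts := by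
    intro p
    simp [hA, Finset.mem_product]
  set φ : V × W → V × W := fun p => (m p.1, n p.2) with hφ
  have hφA : ∀ p ∈ A, φ p ∈ A := by
    intro p hp
    obtain ⟨h1, h2⟩ := (memA p).mp hp
    exact (memA (φ p)).mpr ⟨hm2 p.1 h1, hn2 p.2 h2⟩
  have hφφ : ∀ p ∈ A, φ (φ p) = p := by
    intro p hp
    obtain ⟨h1, h2⟩ := (memA p).mp hp
    simp only [hφ]
    rw [hm3 p.1 h1, hn3 p.2 h2]
  have hsum1 : (A.card : ℝ) ≤ ∑ p ∈ A, (g p + g (φ p)) := by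
    have hc : (A.card : ℝ) = ∑ _p ∈ A, (1 : ℝ) := by simp
    rw [hc]
    refine Finset.sum_le_sum ?_
    intro p hp
    obtain ⟨h1, h2⟩ := (memA p).mp hp
    exact key p.1 h1 p.2 h2
  have hsum2 : ∑ p ∈ A, g (φ p) = ∑ p ∈ A, g p :=
    Finset.sum_nbij' φ φ hφA hφA hφφ hφφ (fun a _ => rfl)
  have hsum3 : ∑ p ∈ A, g p ≤ ∑ p, g p :=
    Finset.sum_le_sum_of_subset_of_nonneg (Finset.subset_univ A) (fun i _ _ => (hg01 i).1)
  have hAcard : A.card = M.verts.ncard * N.verts.ncard := by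
    simp [hA, Set.ncard_eq_toFinset_card']
  have e1 := aux_two_mul_edges_le_verts hM
  have e2 := aux_two_mul_edges_le_verts hN
  rw [hMcard] at e1
  rw [hNcard] at e2
  rw [finsum_eq_sum_of_fintype]
  have c1 : 2 * (matchNum (SRGraph G) : ℝ) ≤ (M.verts.ncard : ℝ) := by exact_mod_cast e1
  have c2 : 2 * (matchNum (SRGraph H) : ℝ) ≤ (N.verts.ncard : ℝ) := by exact_mod_cast e2
  have cA : (A.card : ℝ) = (M.verts.ncard : ℝ) * (N.verts.ncard : ℝ) := by exact_mod_cast hAcard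
  have hprod : (2 * (matchNum (SRGraph G) : ℝ)) * (2 * (matchNum (SRGraph H) : ℝ))
      ≤ (M.verts.ncard : ℝ) * (N.verts.ncard : ℝ) :=
    mul_le_mul c1 c2 (by positivity) (le_trans (by positivity) c1)
  rw [Finset.sum_add_distrib, hsum2] at hsum1
  nlinarith [hsum1, hsum3, hprod, cA]
end
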